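/- Let N be the normalizer of C in G. The reflections of G contained in C are exactly the four elements s_{β₁}, s_{β₂}, s_{β₃}, s_{β₄}; conjugation by elements of N permutes this 4-element set, giving a group homomorphism from N to the symmetric group on {s_{β₁}, s_{β₂}, s_{β₃}, s_{β₄}}; this homomorphism is surjective with kernel C, so that N/C ≅ S₄ and |N| = 384. -/

import Mathlib

open scoped TensorProduct

/-- The lattice `L = ℤ⁷` with standard basis `ℓ, e₁, …, e₆`. -/
abbrev L : Type := Fin 7 → ℤ

/-- The symmetric bilinear form `B(x,y) = x₀y₀ − x₁y₁ − ⋯ − x₆y₆`. -/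
def B (x y : L) : ℤ :=
  x 0 * y 0 - (x 1 * y 1 + x 2 * y 2 + x 3 * y 3 + x 4 * y 4 + x 5 * y 5 + x 6 * y 6)

/-- `h = 3ℓ − e₁ − ⋯ − e₆`, the hyperplane class, with `B(h,h) = 3`. -/
def hv : L := ![3, -1, -1, -1, -1, -1, -1]

/-- The set of lines: `Y = {y ∈ L : B(h,y) = 1 ∧ B(y,y) = −1}`. -/
def Yset : Set L := {y | B hv y = 1 ∧ B y y = -1}

/-- The set of roots: `R = {α ∈ L : B(h,α) = 0 ∧ B(α,α) = −2}`. -/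
def Rset : Set L := {a | B hv a = 0 ∧ B a a = -2}

lemma B_add_smul_left (x y α : L) (c : ℤ) : B (x + c • α) y = B x y + c * B α y := by
  simp only [B, Pi.add_apply, Pi.smul_apply, smul_eq_mul]; ring

/-- The reflection `s_α(x) = x + B(x,α)·α` as a linear map. -/
def sLinMap (α : L) : L →ₗ[ℤ] L where
  toFun x := x + B x α • α
  map_add' x y := by
    funext i
    simp only [B, Pi.add_apply, Pi.smul_apply, smul_eq_mul]
    ring
  map_smul' c x := by
    funext i
    simp only [B, Pi.add_apply, Pi.smul_apply, smul_eq_mul, RingHom.id_apply]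
    ring

lemma sLinMap_apply (α x : L) : sLinMap α x = x + B x α • α := rfl

/-- The reflection `s_α` as a linear automorphism of `L`, for `α` with `B(α,α) = −2`. -/
def sEquiv (α : L) (hα : B α α = -2) : L ≃ₗ[ℤ] L :=
  LinearEquiv.ofLinear (sLinMap α) (sLinMap α)
    (by
      refine LinearMap.ext fun x => ?_
      simp only [LinearMap.comp_apply, LinearMap.id_apply, sLinMap_apply]
      rw [B_add_smul_left, hα]
      have h : B x α + B x α * (-2) = -(B x α) := by ring
      rw [h, neg_smul]
      abel)
    (by
      refine LinearMap.ext fun x => ?_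
      simp only [LinearMap.comp_apply, LinearMap.id_apply, sLinMap_apply]
      rw [B_add_smul_left, hα]
      have h : B x α + B x α * (-2) = -(B x α) := by ring
      rw [h, neg_smul]
      abel)

lemma sEquiv_apply (α : L) (hα : B α α = -2) (x : L) : sEquiv α hα x = x + B x α • α := rfl

/-- `g` is a reflection `s_α` for some root `α ∈ R`. -/
def IsReflection (g : L ≃ₗ[ℤ] L) : Prop := ∃ α ∈ Rset, ∀ x, g x = x + B x α • α

/-- `G = Weyl(E₆)`, the subgroup of `GL(L)` generated by the reflections `s_α`, `α ∈ R`. -/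
def G : Subgroup (L ≃ₗ[ℤ] L) := Subgroup.closure {g | IsReflection g}

/-- The four pairwise orthogonal roots `β₁ = e₁ − e₂`, `β₂ = e₃ − e₄`, `β₃ = e₅ − e₆`,
`β₄ = 2ℓ − e₁ − ⋯ − e₆`. -/
def βv : Fin 4 → L :=
  ![![0, 1, -1, 0, 0, 0, 0], ![0, 0, 0, 1, -1, 0, 0], ![0, 0, 0, 0, 0, 1, -1],
    ![2, -1, -1, -1, -1, -1, -1]]

lemma βv_norm : ∀ i, B (βv i) (βv i) = -2 := by decide

lemma βv_orth_h : ∀ i, B hv (βv i) = 0 := by decide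

/-- The four commuting reflections `s_{β₁}, …, s_{β₄}`. -/
def sβ (i : Fin 4) : L ≃ₗ[ℤ] L := sEquiv (βv i) (βv_norm i)

/-- The maximal cube `C = ⟨s_{β₁}, s_{β₂}, s_{β₃}, s_{β₄}⟩`. -/
def C : Subgroup (L ≃ₗ[ℤ] L) := Subgroup.closure (Set.range sβ)

/-- The normalizer `N` of `C` in `G`. -/
def N : Subgroup (L ≃ₗ[ℤ] L) := Subgroup.normalizer (C : Set (L ≃ₗ[ℤ] L)) ⊓ G


lemma ext7 {f g : L ≃ₗ[ℤ] L} (h : ∀ j : Fin 7, f (Pi.single j 1) = g (Pi.single j 1)) : f = g := by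
  apply LinearEquiv.toLinearMap_injective
  apply Module.Basis.ext (Pi.basisFun ℤ (Fin 7))
  intro j
  simpa [Pi.basisFun_apply] using h j

lemma mul_apply' (x y : L ≃ₗ[ℤ] L) (a : L) : (x * y) a = x (y a) := rfl

lemma apply_inv_apply (x : L ≃ₗ[ℤ] L) (a : L) : x (x⁻¹ a) = a := x.apply_symm_apply a

lemma inv_apply_apply (x : L ≃ₗ[ℤ] L) (a : L) : x⁻¹ (x a) = a := x.symm_apply_apply a

lemma B_add_smul_right (x y α : L) (c : ℤ) : B x (y + c • α) = B x y + c * B x α := by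
  simp only [B, Pi.add_apply, Pi.smul_apply, smul_eq_mul]; ring

lemma B_symm (x y : L) : B x y = B y x := by simp only [B]; ring

lemma B_smul_smul (a b : ℤ) (x y : L) : B (a • x) (b • y) = a * b * B x y := by
  simp only [B, Pi.smul_apply, smul_eq_mul]; ring

lemma G_isom : ∀ g ∈ G, (∀ x y, B (g x) (g y) = B x y) ∧ g hv = hv := by
  intro g hg
  refine Subgroup.closure_induction ?_ ?_ ?_ ?_ hg
  · rintro x ⟨α, ⟨hα0, hα2⟩, hx⟩
    constructor
    · intro a b
      rw [hx a, hx b, B_add_smul_left, B_add_smul_right, B_add_smul_right, hα2, B_symm α b]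
      ring
    · rw [hx hv, hα0, zero_smul, add_zero]
  · exact ⟨fun x y => rfl, rfl⟩
  · rintro x y hx hy ⟨hx1, hx2⟩ ⟨hy1, hy2⟩
    refine ⟨fun a b => ?_, ?_⟩
    · rw [mul_apply', mul_apply', hx1, hy1]
    · rw [mul_apply', hy2, hx2]
  · rintro x hx ⟨hx1, hx2⟩
    constructor
    · intro a b
      have h := (hx1 (x⁻¹ a) (x⁻¹ b)).symm
      rwa [apply_inv_apply, apply_inv_apply] at h
    · have : x⁻¹ hv = x⁻¹ (x hv) := by rw [hx2]
      rw [this, inv_apply_apply]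

lemma isRefl_sβ (i : Fin 4) : IsReflection (sβ i) :=
  ⟨βv i, ⟨βv_orth_h i, βv_norm i⟩, fun _ => rfl⟩

lemma sβ_mem_G (i : Fin 4) : sβ i ∈ G := Subgroup.subset_closure (isRefl_sβ i)

lemma C_le_G : C ≤ G := by
  rw [C, Subgroup.closure_le]
  rintro x ⟨i, rfl⟩
  exact sβ_mem_G i

lemma sβ_mem_C (i : Fin 4) : sβ i ∈ C := Subgroup.subset_closure ⟨i, rfl⟩

lemma mul_sEquiv (u : L ≃ₗ[ℤ] L) (hu : ∀ x y, B (u x) (u y) = B x y) (α : L) (hα : B α α = -2) :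
    u * sEquiv α hα = sEquiv (u α) (by rw [hu]; exact hα) * u := by
  apply LinearEquiv.ext; intro x
  rw [mul_apply', mul_apply', sEquiv_apply, sEquiv_apply, map_add, map_smul, hu]

lemma conj_sEquiv (u : L ≃ₗ[ℤ] L) (hu : ∀ x y, B (u x) (u y) = B x y) (α : L) (hα : B α α = -2) :
    u * sEquiv α hα * u⁻¹ = sEquiv (u α) (by rw [hu]; exact hα) := by
  rw [mul_sEquiv u hu]
  group

lemma conj_sβ (u : L ≃ₗ[ℤ] L) (hu : ∀ x y, B (u x) (u y) = B x y) (i : Fin 4) :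
    u * sβ i * u⁻¹ = sEquiv (u (βv i)) (by rw [hu]; exact βv_norm i) :=
  conj_sEquiv u hu (βv i) (βv_norm i)

-- decide-powered facts
lemma sβ_comm_aux : ∀ i j : Fin 4, ∀ k : Fin 7,
    (sβ i) ((sβ j) (Pi.single k 1)) = (sβ j) ((sβ i) (Pi.single k 1)) := by decide

lemma sβ_comm (i j : Fin 4) : sβ i * sβ j = sβ j * sβ i :=
  ext7 fun k => sβ_comm_aux i j k

lemma sβ_sq_aux : ∀ i : Fin 4, ∀ k : Fin 7, (sβ i) ((sβ i) (Pi.single k 1)) = Pi.single k 1 := by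
  decide

lemma sβ_sq (i : Fin 4) : sβ i * sβ i = 1 := ext7 fun k => sβ_sq_aux i k

lemma sβ_inv (i : Fin 4) : (sβ i)⁻¹ = sβ i := inv_eq_of_mul_eq_one_left (sβ_sq i)

/-- product over a sign pattern -/
def Pc (ε : Fin 4 → Bool) : L ≃ₗ[ℤ] L :=
  (cond (ε 0) (sβ 0) 1) * (cond (ε 1) (sβ 1) 1) * ((cond (ε 2) (sβ 2) 1) * (cond (ε 3) (sβ 3) 1))

lemma Pc_mem_C (ε : Fin 4 → Bool) : Pc ε ∈ C := by
  have h : ∀ i : Fin 4, (cond (ε i) (sβ i) 1) ∈ C := by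
    intro i; cases ε i
    · exact one_mem C
    · exact sβ_mem_C i
  exact mul_mem (mul_mem (h 0) (h 1)) (mul_mem (h 2) (h 3))

lemma sβ_mul_Pc_aux : ∀ (i : Fin 4) (ε : Fin 4 → Bool) (k : Fin 7),
    (sβ i) (Pc ε (Pi.single k 1)) = Pc (fun j => xor (decide (j = i)) (ε j)) (Pi.single k 1) := by
  decide

lemma sβ_mul_Pc (i : Fin 4) (ε : Fin 4 → Bool) :
    sβ i * Pc ε = Pc (fun j => xor (decide (j = i)) (ε j)) :=
  ext7 fun k => sβ_mul_Pc_aux i ε k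

lemma Pc_false_aux : ∀ k : Fin 7, Pc (fun _ => false) (Pi.single k 1) = Pi.single k 1 := by decide

lemma Pc_false : Pc (fun _ => false) = 1 := ext7 fun k => Pc_false_aux k

lemma Pc_single_aux : ∀ (i : Fin 4) (k : Fin 7),
    Pc (fun j => decide (j = i)) (Pi.single k 1) = sβ i (Pi.single k 1) := by decide

lemma Pc_single (i : Fin 4) : Pc (fun j => decide (j = i)) = sβ i := ext7 fun k => Pc_single_aux i k

lemma mem_C_iff (g : L ≃ₗ[ℤ] L) : g ∈ C ↔ ∃ ε, Pc ε = g := by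
  constructor
  · intro hg
    refine Subgroup.closure_induction_left ?_ ?_ ?_ hg
    · exact ⟨fun _ => false, Pc_false⟩
    · rintro x ⟨i, rfl⟩ y _ ⟨ε, rfl⟩
      exact ⟨_, (sβ_mul_Pc i ε).symm⟩
    · rintro x ⟨i, rfl⟩ y _ ⟨ε, rfl⟩
      rw [sβ_inv]
      exact ⟨_, (sβ_mul_Pc i ε).symm⟩
  · rintro ⟨ε, rfl⟩
    exact Pc_mem_C ε

lemma Pc_beta : ∀ (ε : Fin 4 → Bool) (i : Fin 4), Pc ε (βv i) = cond (ε i) (-(βv i)) (βv i) := by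
  decide

lemma Pc_hv : ∀ ε, Pc ε hv = hv := by decide

-- part 1: injectivity
lemma sβ_beta_self : ∀ i : Fin 4, sβ i (βv i) = -(βv i) := by decide
lemma sβ_beta_other : ∀ i j : Fin 4, i ≠ j → sβ j (βv i) = βv i := by decide
lemma βv_ne_neg : ∀ i : Fin 4, βv i ≠ -(βv i) := by decide
lemma βv_ne_zero : ∀ i : Fin 4, ∃ k, βv i k ≠ 0 := by decide
lemma βv_pair : ∀ i j : Fin 4, i ≠ j →
    ∃ k, (βv i k = 0 ∧ βv j k ≠ 0) ∨ (βv j k = 0 ∧ βv i k ≠ 0) := by decide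

lemma sβ_inj : Function.Injective sβ := by
  intro i j h
  by_contra hne
  have h1 := sβ_beta_self i
  rw [h] at h1
  rw [sβ_beta_other i j hne] at h1
  exact βv_ne_neg i h1

lemma one_not_refl : ¬ IsReflection (1 : L ≃ₗ[ℤ] L) := by
  rintro ⟨α, ⟨-, hα2⟩, hg⟩
  have h := hg α
  rw [hα2] at h
  have h0 : ∀ k, α k = 0 := by
    intro k
    have hk := congrFun h k
    simp only [LinearEquiv.coe_one, id_eq, Pi.add_apply, Pi.smul_apply, smul_eq_mul] at hk
    omega
  rw [show α = (fun _ => 0 : L) from funext h0] at hα2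
  simp [B] at hα2

lemma two_not_refl (g : L ≃ₗ[ℤ] L) (i j : Fin 4) (hij : i ≠ j)
    (hi : g (βv i) = -(βv i)) (hj : g (βv j) = -(βv j)) : ¬ IsReflection g := by
  rintro ⟨α, ⟨-, -⟩, hg⟩
  have Hi : ∀ k, B (βv i) α * α k = -2 * βv i k := by
    intro k
    have e := hg (βv i)
    rw [hi] at e
    have hk := congrFun e.symm k
    simp only [Pi.add_apply, Pi.smul_apply, Pi.neg_apply, smul_eq_mul] at hk
    linarith
  have Hj : ∀ k, B (βv j) α * α k = -2 * βv j k := by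
    intro k
    have e := hg (βv j)
    rw [hj] at e
    have hk := congrFun e.symm k
    simp only [Pi.add_apply, Pi.smul_apply, Pi.neg_apply, smul_eq_mul] at hk
    linarith
  have hine : B (βv i) α ≠ 0 := by
    intro h0
    obtain ⟨k, hk⟩ := βv_ne_zero i
    have := Hi k
    rw [h0] at this
    omega
  have hjne : B (βv j) α ≠ 0 := by
    intro h0
    obtain ⟨k, hk⟩ := βv_ne_zero j
    have := Hj k
    rw [h0] at this
    omega
  obtain ⟨k, hk | hk⟩ := βv_pair i j hij
  · have h1 := Hi k
    rw [hk.1] at h1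
    have hαk : α k = 0 := by
      rcases mul_eq_zero.mp (by omega : B (βv i) α * α k = 0) with h | h
      · exact absurd h hine
      · exact h
    have h2 := Hj k
    rw [hαk] at h2
    have := hk.2
    omega
  · have h1 := Hj k
    rw [hk.1] at h1
    have hαk : α k = 0 := by
      rcases mul_eq_zero.mp (by omega : B (βv j) α * α k = 0) with h | h
      · exact absurd h hjne
      · exact h
    have h2 := Hi k
    rw [hαk] at h2
    have := hk.2
    omega

lemma ε_classify : ∀ ε : Fin 4 → Bool, (∀ i, ε i = false) ∨
    (∃ i, ∀ j, ε j = decide (j = i)) ∨ (∃ i j, i ≠ j ∧ ε i = true ∧ ε j = true) := by decide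

lemma refl_in_C : {g : L ≃ₗ[ℤ] L | IsReflection g ∧ g ∈ C} = Set.range sβ := by
  ext g
  constructor
  · rintro ⟨hrefl, hC⟩
    obtain ⟨ε, rfl⟩ := (mem_C_iff g).mp hC
    rcases ε_classify ε with h0 | ⟨i, hi⟩ | ⟨i, j, hij, hi, hj⟩
    · rw [show ε = fun _ => false from funext h0, Pc_false] at hrefl
      exact absurd hrefl one_not_refl
    · rw [show ε = fun j => decide (j = i) from funext hi, Pc_single i]
      exact ⟨i, rfl⟩
    · exfalso
      have h1 : Pc ε (βv i) = -(βv i) := by rw [Pc_beta ε i, hi]; rfl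
      have h2 : Pc ε (βv j) = -(βv j) := by rw [Pc_beta ε j, hj]; rfl
      exact two_not_refl _ i j hij h1 h2 hrefl
  · rintro ⟨i, rfl⟩
    exact ⟨isRefl_sβ i, sβ_mem_C i⟩

lemma part3 : ∀ n ∈ N, ∀ i : Fin 4, ∃ j : Fin 4, n * sβ i * n⁻¹ = sβ j := by
  intro n hn i
  obtain ⟨hNor, hG⟩ := Subgroup.mem_inf.mp hn
  obtain ⟨hB, hh⟩ := G_isom n hG
  have hconj := conj_sβ n hB i
  have hC : n * sβ i * n⁻¹ ∈ C := (Subgroup.mem_normalizer_iff.mp hNor (sβ i)).mp (sβ_mem_C i)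
  have hrefl : IsReflection (n * sβ i * n⁻¹) := by
    rw [hconj]
    refine ⟨n (βv i), ⟨?_, ?_⟩, fun x => rfl⟩
    · calc B hv (n (βv i)) = B (n hv) (n (βv i)) := by rw [hh]
        _ = B hv (βv i) := hB _ _
        _ = 0 := βv_orth_h i
    · rw [hB]; exact βv_norm i
  have hmem : n * sβ i * n⁻¹ ∈ Set.range sβ := by rw [← refl_in_C]; exact ⟨hrefl, hC⟩
  obtain ⟨j, hj⟩ := hmem
  exact ⟨j, hj.symm⟩

lemma conj_mem_C (u : L ≃ₗ[ℤ] L) (hu : ∀ i, ∃ j, u * sβ i * u⁻¹ = sβ j) :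
    ∀ y ∈ C, u * y * u⁻¹ ∈ C := by
  intro y hy
  refine Subgroup.closure_induction ?_ ?_ ?_ ?_ hy
  · rintro z ⟨i, rfl⟩
    obtain ⟨j, hj⟩ := hu i
    rw [hj]
    exact sβ_mem_C j
  · have h : u * 1 * u⁻¹ = 1 := by group
    rw [h]; exact one_mem C
  · intro a b _ _ hpa hpb
    have h : u * (a * b) * u⁻¹ = (u * a * u⁻¹) * (u * b * u⁻¹) := by group
    rw [h]; exact mul_mem hpa hpb
  · intro a _ hpa
    have h : u * a⁻¹ * u⁻¹ = (u * a * u⁻¹)⁻¹ := by group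
    rw [h]; exact inv_mem hpa

lemma mem_normalizer_of (n : L ≃ₗ[ℤ] L) (h1 : ∀ i, ∃ j, n * sβ i * n⁻¹ = sβ j)
    (h2 : ∀ i, ∃ j, n⁻¹ * sβ i * n = sβ j) : n ∈ Subgroup.normalizer (C : Set (L ≃ₗ[ℤ] L)) := by
  rw [Subgroup.mem_normalizer_iff]
  intro x
  constructor
  · intro hx
    exact conj_mem_C n h1 x hx
  · intro hx
    have h2' : ∀ i, ∃ j, n⁻¹ * sβ i * (n⁻¹)⁻¹ = sβ j := by simpa [inv_inv] using h2
    have h := conj_mem_C n⁻¹ h2' _ hx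
    have e : n⁻¹ * (n * x * n⁻¹) * (n⁻¹)⁻¹ = x := by group
    rwa [e] at h

lemma C_central : ∀ c ∈ C, ∀ i : Fin 4, c * sβ i * c⁻¹ = sβ i := by
  intro c hc
  refine Subgroup.closure_induction ?_ ?_ ?_ ?_ hc
  · rintro x ⟨j, rfl⟩ i
    rw [sβ_inv j, sβ_comm j i, mul_assoc, sβ_sq j, mul_one]
  · intro i
    group
  · intro a b _ _ ha hb i
    have h : (a * b) * sβ i * (a * b)⁻¹ = a * (b * sβ i * b⁻¹) * a⁻¹ := by group
    rw [h, hb i, ha i]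
  · intro a _ ha i
    have h2 := congrArg (fun z => a⁻¹ * z * a) (ha i)
    rw [inv_inv, ← h2]
    group

-- explicit normalizer elements realizing the adjacent transpositions
def n01 : L ≃ₗ[ℤ] L :=
  sEquiv ![0,1,0,-1,0,0,0] (by decide) * sEquiv ![0,0,1,0,-1,0,0] (by decide)
def n12 : L ≃ₗ[ℤ] L :=
  sEquiv ![0,0,0,1,0,-1,0] (by decide) * sEquiv ![0,0,0,0,1,0,-1] (by decide)
def n23 : L ≃ₗ[ℤ] L :=
  sEquiv ![1,0,0,-1,-1,0,-1] (by decide) * sEquiv ![1,-1,-1,0,0,0,-1] (by decide)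

lemma sEquiv_mem_G (α : L) (h0 : B hv α = 0) (h2 : B α α = -2) : sEquiv α h2 ∈ G :=
  Subgroup.subset_closure ⟨α, ⟨h0, h2⟩, fun _ => rfl⟩

lemma n01_mem_G : n01 ∈ G :=
  mul_mem (sEquiv_mem_G _ (by decide) _) (sEquiv_mem_G _ (by decide) _)
lemma n12_mem_G : n12 ∈ G :=
  mul_mem (sEquiv_mem_G _ (by decide) _) (sEquiv_mem_G _ (by decide) _)
lemma n23_mem_G : n23 ∈ G :=
  mul_mem (sEquiv_mem_G _ (by decide) _) (sEquiv_mem_G _ (by decide) _)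

lemma n01_aux : ∀ (i : Fin 4) (k : Fin 7),
    n01 (sβ i (Pi.single k 1)) = sβ (Equiv.swap 0 1 i) (n01 (Pi.single k 1)) := by decide
lemma n12_aux : ∀ (i : Fin 4) (k : Fin 7),
    n12 (sβ i (Pi.single k 1)) = sβ (Equiv.swap 1 2 i) (n12 (Pi.single k 1)) := by decide
lemma n23_aux : ∀ (i : Fin 4) (k : Fin 7),
    n23 (sβ i (Pi.single k 1)) = sβ (Equiv.swap 2 3 i) (n23 (Pi.single k 1)) := by decide

lemma conj_of_aux (n : L ≃ₗ[ℤ] L) (σ : Equiv.Perm (Fin 4))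
    (h : ∀ i, n * sβ i = sβ (σ i) * n) : ∀ i, n * sβ i * n⁻¹ = sβ (σ i) := by
  intro i
  rw [h i, mul_assoc, mul_inv_cancel, mul_one]

lemma n01_conj : ∀ i, n01 * sβ i * n01⁻¹ = sβ (Equiv.swap 0 1 i) :=
  conj_of_aux _ _ fun i => ext7 fun k => n01_aux i k
lemma n12_conj : ∀ i, n12 * sβ i * n12⁻¹ = sβ (Equiv.swap 1 2 i) :=
  conj_of_aux _ _ fun i => ext7 fun k => n12_aux i k
lemma n23_conj : ∀ i, n23 * sβ i * n23⁻¹ = sβ (Equiv.swap 2 3 i) :=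
  conj_of_aux _ _ fun i => ext7 fun k => n23_aux i k

lemma inv_conj_of (n : L ≃ₗ[ℤ] L) (σ : Equiv.Perm (Fin 4))
    (h : ∀ i, n * sβ i * n⁻¹ = sβ (σ i)) : ∀ i, n⁻¹ * sβ i * n = sβ (σ.symm i) := by
  intro i
  have h2 := h (σ.symm i)
  rw [Equiv.apply_symm_apply] at h2
  rw [← h2]
  group

lemma mem_N_of (n : L ≃ₗ[ℤ] L) (hG : n ∈ G) (σ : Equiv.Perm (Fin 4))
    (h : ∀ i, n * sβ i * n⁻¹ = sβ (σ i)) : n ∈ N :=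
  Subgroup.mem_inf.mpr
    ⟨mem_normalizer_of n (fun i => ⟨σ i, h i⟩) (fun i => ⟨σ.symm i, inv_conj_of n σ h i⟩), hG⟩

/-- the subgroup of permutations realized by conjugation by N -/
def A : Subgroup (Equiv.Perm (Fin 4)) where
  carrier := {σ | ∃ n ∈ N, ∀ i : Fin 4, n * sβ i * n⁻¹ = sβ (σ i)}
  one_mem' := ⟨1, one_mem N, by intro i; simp⟩
  mul_mem' := by
    rintro σ τ ⟨n, hn, hcn⟩ ⟨m, hm, hcm⟩
    refine ⟨n * m, mul_mem hn hm, fun i => ?_⟩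
    have h : (n * m) * sβ i * (n * m)⁻¹ = n * (m * sβ i * m⁻¹) * n⁻¹ := by group
    rw [h, hcm i, hcn (τ i)]
    rfl
  inv_mem' := by
    rintro σ ⟨n, hn, hcn⟩
    refine ⟨n⁻¹, inv_mem hn, fun i => ?_⟩
    rw [inv_inv]
    exact inv_conj_of n σ hcn i

lemma part4 : ∀ σ : Equiv.Perm (Fin 4), ∃ n ∈ N, ∀ i, n * sβ i * n⁻¹ = sβ (σ i) := by
  have h01 : Equiv.swap 0 1 ∈ A := ⟨n01, mem_N_of n01 n01_mem_G _ n01_conj, n01_conj⟩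
  have h12 : Equiv.swap 1 2 ∈ A := ⟨n12, mem_N_of n12 n12_mem_G _ n12_conj, n12_conj⟩
  have h23 : Equiv.swap 2 3 ∈ A := ⟨n23, mem_N_of n23 n23_mem_G _ n23_conj, n23_conj⟩
  have h02 : Equiv.swap (0:Fin 4) 2 ∈ A := by
    have e : Equiv.swap (0:Fin 4) 2 = Equiv.swap 1 2 * Equiv.swap 0 1 * Equiv.swap 1 2 := by decide
    rw [e]; exact mul_mem (mul_mem h12 h01) h12
  have h13 : Equiv.swap (1:Fin 4) 3 ∈ A := by
    have e : Equiv.swap (1:Fin 4) 3 = Equiv.swap 2 3 * Equiv.swap 1 2 * Equiv.swap 2 3 := by decide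
    rw [e]; exact mul_mem (mul_mem h23 h12) h23
  have h03 : Equiv.swap (0:Fin 4) 3 ∈ A := by
    have e : Equiv.swap (0:Fin 4) 3 = Equiv.swap 1 3 * Equiv.swap 0 1 * Equiv.swap 1 3 := by decide
    rw [e]; exact mul_mem (mul_mem h13 h01) h13
  have hs : ∀ x y : Fin 4, x ≠ y → Equiv.swap x y ∈ A := by
    intro x y hxy
    fin_cases x <;> fin_cases y <;>
      first
        | exact absurd rfl hxy
        | exact h01 | exact h02 | exact h03 | exact h12 | exact h13 | exact h23
        | (rw [Equiv.swap_comm]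
           first | exact h01 | exact h02 | exact h03 | exact h12 | exact h13 | exact h23)
  intro σ
  have : σ ∈ A := by
    refine Equiv.Perm.swap_induction_on σ (one_mem A) ?_
    intro f x y hxy hf
    exact mul_mem (hs x y hxy) hf
  exact this

lemma B_expand (x w : L) : B x w = x 0 * w 0 -
    (x 1 * w 1 + x 2 * w 2 + x 3 * w 3 + x 4 * w 4 + x 5 * w 5 + x 6 * w 6) := rfl

lemma B_hv_expand (w : L) : B hv w = 3 * w 0 + w 1 + w 2 + w 3 + w 4 + w 5 + w 6 := by
  show (3:ℤ) * w 0 - ((-1) * w 1 + (-1) * w 2 + (-1) * w 3 + (-1) * w 4 + (-1) * w 5 + (-1) * w 6) = _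
  ring

lemma B_b0_expand (w : L) : B (βv 0) w = - w 1 + w 2 := by
  show (0:ℤ) * w 0 - (1 * w 1 + (-1) * w 2 + 0 * w 3 + 0 * w 4 + 0 * w 5 + 0 * w 6) = _
  ring

lemma B_b1_expand (w : L) : B (βv 1) w = - w 3 + w 4 := by
  show (0:ℤ) * w 0 - (0 * w 1 + 0 * w 2 + 1 * w 3 + (-1) * w 4 + 0 * w 5 + 0 * w 6) = _
  ring

lemma B_b2_expand (w : L) : B (βv 2) w = - w 5 + w 6 := by
  show (0:ℤ) * w 0 - (0 * w 1 + 0 * w 2 + 0 * w 3 + 0 * w 4 + 1 * w 5 + (-1) * w 6) = _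
  ring

lemma B_b3_expand (w : L) : B (βv 3) w = 2 * w 0 + w 1 + w 2 + w 3 + w 4 + w 5 + w 6 := by
  show (2:ℤ) * w 0 - ((-1) * w 1 + (-1) * w 2 + (-1) * w 3 + (-1) * w 4 + (-1) * w 5 + (-1) * w 6) = _
  ring

lemma consec_nonneg (x : ℤ) : 0 ≤ x * (x + 1) := by
  rcases le_or_gt 0 x with h | h
  · exact mul_nonneg h (by omega)
  · nlinarith

lemma key3 (x b c : ℤ) (h1 : x + b + c = 0) (h2 : x * x + x + b * b + c * c = 0) :
    x = 0 ∧ b = 0 ∧ c = 0 := by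
  have hc := consec_nonneg x
  have hb : b = 0 := by nlinarith [mul_self_nonneg b, mul_self_nonneg c]
  have hcc : c = 0 := by nlinarith [mul_self_nonneg b, mul_self_nonneg c]
  exact ⟨by omega, hb, hcc⟩

lemma scalar_key (w : Fin 7 → ℤ) (d1 d2 d3 : ℤ)
    (hd : (d1 = 1 ∧ d2 = 0 ∧ d3 = 0) ∨ (d1 = 0 ∧ d2 = 1 ∧ d3 = 0) ∨ (d1 = 0 ∧ d2 = 0 ∧ d3 = 1))
    (l1 : 3 * w 0 + w 1 + w 2 + w 3 + w 4 + w 5 + w 6 = 1)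
    (l2 : - w 1 + w 2 = -d1)
    (l3 : - w 3 + w 4 = -d2)
    (l4 : - w 5 + w 6 = -d3)
    (l5 : 2 * w 0 + w 1 + w 2 + w 3 + w 4 + w 5 + w 6 = 1)
    (q : w 0 * w 0 - (w 1 * w 1 + w 2 * w 2 + w 3 * w 3 + w 4 * w 4 + w 5 * w 5 + w 6 * w 6) = -1) :
    w 0 = 0 ∧ w 1 = d1 ∧ w 2 = 0 ∧ w 3 = d2 ∧ w 4 = 0 ∧ w 5 = d3 ∧ w 6 = 0 := by
  rcases hd with ⟨e1, e2, e3⟩ | ⟨e1, e2, e3⟩ | ⟨e1, e2, e3⟩ <;> subst e1 <;> subst e2 <;> subst e3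
  · have hlin : w 0 = 0 ∧ w 1 = w 2 + 1 ∧ w 4 = w 3 ∧ w 6 = w 5 ∧ w 2 + w 3 + w 5 = 0 := by omega
    obtain ⟨h0, h1, h4, h6, hsum⟩ := hlin
    rw [h0, h1, h4, h6] at q
    obtain ⟨k1, k2, k3⟩ := key3 (w 2) (w 3) (w 5) hsum (by linarith)
    omega
  · have hlin : w 0 = 0 ∧ w 2 = w 1 ∧ w 3 = w 4 + 1 ∧ w 6 = w 5 ∧ w 4 + w 1 + w 5 = 0 := by omega
    obtain ⟨h0, h2, h3, h6, hsum⟩ := hlin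
    rw [h0, h2, h3, h6] at q
    obtain ⟨k1, k2, k3⟩ := key3 (w 4) (w 1) (w 5) hsum (by linarith)
    omega
  · have hlin : w 0 = 0 ∧ w 2 = w 1 ∧ w 4 = w 3 ∧ w 5 = w 6 + 1 ∧ w 6 + w 1 + w 3 = 0 := by omega
    obtain ⟨h0, h2, h4, h5, hsum⟩ := hlin
    rw [h0, h2, h4, h5] at q
    obtain ⟨k1, k2, k3⟩ := key3 (w 6) (w 1) (w 3) hsum (by linarith)
    omega

lemma fix_basis (m : L ≃ₗ[ℤ] L) (hB : ∀ x y, B (m x) (m y) = B x y) (hh : m hv = hv)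
    (hβ : ∀ i, m (βv i) = βv i) : m = 1 := by
  have step : ∀ (v : L) (d1 d2 d3 : ℤ),
      ((d1 = 1 ∧ d2 = 0 ∧ d3 = 0) ∨ (d1 = 0 ∧ d2 = 1 ∧ d3 = 0) ∨ (d1 = 0 ∧ d2 = 0 ∧ d3 = 1)) →
      B hv v = 1 → B (βv 0) v = -d1 → B (βv 1) v = -d2 → B (βv 2) v = -d3 →
      B (βv 3) v = 1 → B v v = -1 →
      m v = ![0, d1, 0, d2, 0, d3, 0] := by
    intro v d1 d2 d3 hd H1 H2 H3 H4 H5 H6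
    have E1 : B hv (m v) = 1 := by rw [← hh, hB]; exact H1
    have E2 : B (βv 0) (m v) = -d1 := by rw [← hβ 0, hB]; exact H2
    have E3 : B (βv 1) (m v) = -d2 := by rw [← hβ 1, hB]; exact H3
    have E4 : B (βv 2) (m v) = -d3 := by rw [← hβ 2, hB]; exact H4
    have E5 : B (βv 3) (m v) = 1 := by rw [← hβ 3, hB]; exact H5
    have E6 : B (m v) (m v) = -1 := by rw [hB]; exact H6
    rw [B_hv_expand] at E1
    rw [B_b0_expand] at E2
    rw [B_b1_expand] at E3
    rw [B_b2_expand] at E4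
    rw [B_b3_expand] at E5
    rw [B_expand] at E6
    obtain ⟨h0, h1, h2, h3, h4, h5, h6⟩ :=
      scalar_key (m v) d1 d2 d3 hd (by linarith) E2 E3 E4 (by linarith) E6
    funext k
    fin_cases k
    · exact h0
    · exact h1
    · exact h2
    · exact h3
    · exact h4
    · exact h5
    · exact h6
  have he1 : m (Pi.single 1 1) = Pi.single 1 1 := by
    have h := step (Pi.single 1 1) 1 0 0 (Or.inl ⟨rfl, rfl, rfl⟩)
      (by decide) (by decide) (by decide) (by decide) (by decide) (by decide)
    rw [h]; decide
  have he3 : m (Pi.single 3 1) = Pi.single 3 1 := by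
    have h := step (Pi.single 3 1) 0 1 0 (Or.inr (Or.inl ⟨rfl, rfl, rfl⟩))
      (by decide) (by decide) (by decide) (by decide) (by decide) (by decide)
    rw [h]; decide
  have he5 : m (Pi.single 5 1) = Pi.single 5 1 := by
    have h := step (Pi.single 5 1) 0 0 1 (Or.inr (Or.inr ⟨rfl, rfl, rfl⟩))
      (by decide) (by decide) (by decide) (by decide) (by decide) (by decide)
    rw [h]; decide
  have he2 : m (Pi.single 2 1) = Pi.single 2 1 := by
    have e : (Pi.single 2 1 : L) = Pi.single 1 1 - βv 0 := by decide
    rw [e, map_sub, he1, hβ 0]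
  have he4 : m (Pi.single 4 1) = Pi.single 4 1 := by
    have e : (Pi.single 4 1 : L) = Pi.single 3 1 - βv 1 := by decide
    rw [e, map_sub, he3, hβ 1]
  have he6 : m (Pi.single 6 1) = Pi.single 6 1 := by
    have e : (Pi.single 6 1 : L) = Pi.single 5 1 - βv 2 := by decide
    rw [e, map_sub, he5, hβ 2]
  have hl : m (Pi.single 0 1) = Pi.single 0 1 := by
    have e : (3 : ℤ) • (Pi.single 0 1 : L) = hv + Pi.single 1 1 + Pi.single 2 1 + Pi.single 3 1
        + Pi.single 4 1 + Pi.single 5 1 + Pi.single 6 1 := by decide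
    have h3 : (3 : ℤ) • m (Pi.single 0 1) = (3 : ℤ) • (Pi.single 0 1 : L) := by
      rw [← map_smul, e, map_add, map_add, map_add, map_add, map_add, map_add,
        hh, he1, he2, he3, he4, he5, he6]
    exact smul_right_injective L (by norm_num : (3:ℤ) ≠ 0) h3
  apply ext7
  intro j
  fin_cases j
  · exact hl
  · exact he1
  · exact he2
  · exact he3
  · exact he4
  · exact he5
  · exact he6

lemma part5 (n : L ≃ₗ[ℤ] L) (hn : n ∈ N) (hc : ∀ i : Fin 4, n * sβ i * n⁻¹ = sβ i) : n ∈ C := by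
  obtain ⟨hNor, hG⟩ := Subgroup.mem_inf.mp hn
  obtain ⟨hB, hh⟩ := G_isom n hG
  have hpm : ∀ i, n (βv i) = βv i ∨ n (βv i) = -(βv i) := by
    intro i
    have hconj := conj_sβ n hB i
    rw [hc i] at hconj
    have happ := congrArg (fun f : L ≃ₗ[ℤ] L => f (βv i)) hconj
    rw [sβ_beta_self i, sEquiv_apply] at happ
    set c : ℤ := B (βv i) (n (βv i)) with hcdef
    have hco : ∀ k, c * (n (βv i) k) = -2 * βv i k := by
      intro k
      have hk := congrFun happ k
      simp only [Pi.add_apply, Pi.smul_apply, Pi.neg_apply, smul_eq_mul] at hk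
      linarith
    have hceq : c • n (βv i) = (-2 : ℤ) • βv i := by
      funext k
      simp only [Pi.smul_apply, smul_eq_mul]
      linarith [hco k]
    have hn2 : B (n (βv i)) (n (βv i)) = -2 := by rw [hB]; exact βv_norm i
    have hnorm2 : c * c * B (n (βv i)) (n (βv i)) = (-2) * (-2) * B (βv i) (βv i) := by
      rw [← B_smul_smul, ← B_smul_smul, hceq]
    rw [hn2, βv_norm i] at hnorm2
    have hfact : (c - 2) * (c + 2) = 0 := by nlinarith [hnorm2]
    rcases mul_eq_zero.mp hfact with h | h
    · -- c = 2 : n βv i = -(βv i)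
      right
      have hc2 : c = 2 := by omega
      rw [hc2] at hceq
      have h2 : (2 : ℤ) • n (βv i) = (2 : ℤ) • (-(βv i)) := by
        rw [hceq, smul_neg, ← neg_smul]
      exact smul_right_injective L (by norm_num : (2:ℤ) ≠ 0) h2
    · -- c = -2 : n βv i = βv i
      left
      have hc2 : c = -2 := by omega
      rw [hc2] at hceq
      exact smul_right_injective L (by norm_num : (-2:ℤ) ≠ 0) hceq
  classical
  let ε : Fin 4 → Bool := fun i => decide (n (βv i) = -(βv i))
  have hm : ∀ i, (n * Pc ε) (βv i) = βv i := by
    intro i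
    rw [mul_apply', Pc_beta]
    by_cases hi : n (βv i) = -(βv i)
    · have he : ε i = true := decide_eq_true hi
      rw [he]
      show n (-(βv i)) = βv i
      rw [map_neg, hi, neg_neg]
    · have he : ε i = false := decide_eq_false hi
      rw [he]
      show n (βv i) = βv i
      exact (hpm i).resolve_right hi
  have hmh : (n * Pc ε) hv = hv := by rw [mul_apply', Pc_hv, hh]
  have hmB : ∀ x y, B ((n * Pc ε) x) ((n * Pc ε) y) = B x y := by
    intro x y
    obtain ⟨hB2, -⟩ := G_isom (Pc ε) (C_le_G (Pc_mem_C ε))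
    rw [mul_apply', mul_apply', hB, hB2]
  have hone := fix_basis (n * Pc ε) hmB hmh hm
  have hinv : n = (Pc ε)⁻¹ := by
    rw [← one_mul (Pc ε)⁻¹, ← hone, mul_assoc, mul_inv_cancel, mul_one]
  rw [hinv]
  exact inv_mem (Pc_mem_C ε)

lemma C_le_N : C ≤ N := fun c hc =>
  Subgroup.mem_inf.mpr ⟨Subgroup.le_normalizer hc, C_le_G hc⟩

lemma Pc_inj : Function.Injective Pc := by
  intro ε ε' h
  funext i
  have happ := congrArg (fun g : L ≃ₗ[ℤ] L => g (βv i)) h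
  simp only [Pc_beta] at happ
  cases hε : ε i <;> cases hε' : ε' i <;> rw [hε, hε'] at happ <;>
    first
      | rfl
      | exact absurd (show βv i = -(βv i) from happ) (βv_ne_neg i)
      | exact absurd (show βv i = -(βv i) from happ.symm) (βv_ne_neg i)


lemma card_C : Nat.card ↥C = 16 := by
  have hset : (C : Set (L ≃ₗ[ℤ] L)) = Set.range Pc := by
    ext g
    rw [SetLike.mem_coe, mem_C_iff]
    exact Iff.rfl
  calc Nat.card ↥C = Nat.card ↥(Set.range Pc) := Nat.card_congr (Equiv.setCongr hset)
    _ = Nat.card (Fin 4 → Bool) := Nat.card_congr (Equiv.ofInjective Pc Pc_inj).symm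
    _ = 16 := by simp [Nat.card_eq_fintype_card]

/-- The reflections contained in `C` are exactly `s_{β₁}, …, s_{β₄}` (pairwise distinct);
conjugation by `N` permutes them; the resulting homomorphism to the symmetric group on
these four reflections is surjective with kernel `C` (so `N/C ≅ S₄`), and `|N| = 384`. -/
theorem normalizer_of_maximal_cube :
    Function.Injective sβ ∧
    {g : L ≃ₗ[ℤ] L | IsReflection g ∧ g ∈ C} = Set.range sβ ∧
    (∀ n ∈ N, ∀ i : Fin 4, ∃ j : Fin 4, n * sβ i * n⁻¹ = sβ j) ∧
    (∀ σ : Equiv.Perm (Fin 4), ∃ n ∈ N, ∀ i : Fin 4, n * sβ i * n⁻¹ = sβ (σ i)) ∧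
    (∀ n ∈ N, ((∀ i : Fin 4, n * sβ i * n⁻¹ = sβ i) ↔ n ∈ C)) ∧
    Nat.card ↥N = 384 := by
  classical
  refine ⟨sβ_inj, refl_in_C, part3, part4, fun n hn => ⟨part5 n hn, fun hC i => C_central n hC i⟩, ?_⟩
  -- the counting argument
  let f : ↥N → Fin 4 → Fin 4 := fun n i => (part3 n n.2 i).choose
  have f_spec : ∀ (n : ↥N) (i : Fin 4), (n : L ≃ₗ[ℤ] L) * sβ i * (n : L ≃ₗ[ℤ] L)⁻¹ = sβ (f n i) :=
    fun n i => (part3 n n.2 i).choose_spec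
  have f_inj : ∀ n, Function.Injective (f n) := by
    intro n i j hij
    apply sβ_inj
    have h := (f_spec n i).trans (hij ▸ (f_spec n j).symm)
    exact mul_left_cancel (mul_right_cancel h)
  let φfun : ↥N → Equiv.Perm (Fin 4) := fun n =>
    Equiv.ofBijective (f n) (Finite.injective_iff_bijective.mp (f_inj n))
  have φ_mul : ∀ a b : ↥N, φfun (a * b) = φfun a * φfun b := by
    intro a b
    apply Equiv.ext
    intro i
    apply sβ_inj
    show sβ (f (a * b) i) = sβ (f a (f b i))
    calc sβ (f (a * b) i)
        = ((a * b : ↥N) : L ≃ₗ[ℤ] L) * sβ i * ((a * b : ↥N) : L ≃ₗ[ℤ] L)⁻¹ := (f_spec _ _).symm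
      _ = (a : L ≃ₗ[ℤ] L) * ((b : L ≃ₗ[ℤ] L) * sβ i * (b : L ≃ₗ[ℤ] L)⁻¹) * (a : L ≃ₗ[ℤ] L)⁻¹ := by
          rw [Subgroup.coe_mul]; group
      _ = (a : L ≃ₗ[ℤ] L) * sβ (f b i) * (a : L ≃ₗ[ℤ] L)⁻¹ := by rw [f_spec]
      _ = sβ (f a (f b i)) := f_spec a (f b i)
  let φ : ↥N →* Equiv.Perm (Fin 4) := MonoidHom.mk' φfun φ_mul
  have φ_surj : Function.Surjective φ := by
    intro σ
    obtain ⟨n, hnN, hcon⟩ := part4 σ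
    refine ⟨⟨n, hnN⟩, ?_⟩
    apply Equiv.ext
    intro i
    apply sβ_inj
    show sβ (f ⟨n, hnN⟩ i) = sβ (σ i)
    rw [← f_spec ⟨n, hnN⟩ i]
    exact hcon i
  have hker : φ.ker = C.subgroupOf N := by
    ext n
    rw [MonoidHom.mem_ker, Subgroup.mem_subgroupOf]
    constructor
    · intro h1
      apply part5 n n.2
      intro i
      rw [f_spec n i]
      show sβ (φfun n i) = sβ i
      have h2 : φfun n i = i := by
        rw [show φfun n = (1 : Equiv.Perm (Fin 4)) from h1]
        rfl
      rw [h2]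
    · intro hC
      apply Equiv.ext
      intro i
      apply sβ_inj
      show sβ (f n i) = sβ i
      rw [← f_spec n i]
      exact C_central n hC i
  have hcardq : Nat.card (↥N ⧸ φ.ker) = 24 := by
    rw [Nat.card_congr (QuotientGroup.quotientKerEquivOfSurjective φ φ_surj).toEquiv,
      Nat.card_eq_fintype_card, Fintype.card_perm, Fintype.card_fin]
    rfl
  have hcardk : Nat.card φ.ker = 16 := by
    rw [hker, Nat.card_congr (Subgroup.subgroupOfEquivOfLe C_le_N).toEquiv]
    exact card_C
  rw [Subgroup.card_eq_card_quotient_mul_card_subgroup φ.ker, hcardq, hcardk]
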